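/- For every natural number n ≥ 3, the prime counting function satisfies Laurent's formula: π(n) = 2 + ∑_{k=5}^{n} (e^{2πi·(k−1)!/k} − 1)/(e^{−2πi·(1/k)} − 1), where the sum is over integers k with 5 ≤ k ≤ n (and is empty if n < 5). In particular each denominator e^{−2πi/k} − 1 is nonzero for k ≥ 5. -/

import Mathlib

open Complex Finset

lemma aux_dvd_fac {k d c : ℕ} (hd : 0 < d) (hdc : d < c) (hck : c ≤ k - 1) :
    d * c ∣ (k - 1).factorial := by
  have h1 : d ∣ (c - 1).factorial := Nat.dvd_factorial hd (by omega)
  have h2 : d * c ∣ c.factorial := by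
    rcases h1 with ⟨t, ht⟩
    refine ⟨t, ?_⟩
    have : c.factorial = c * (c - 1).factorial := by
      conv_lhs => rw [show c = (c - 1) + 1 by omega]
      rw [Nat.factorial_succ]; congr 1; omega
    rw [this, ht]; ring
  exact h2.trans (Nat.factorial_dvd_factorial hck)

lemma comp_dvd_fac {k : ℕ} (hk : 5 ≤ k) (hp : ¬ k.Prime) : k ∣ (k - 1).factorial := by
  obtain ⟨a, ha, ha2, halt⟩ := Nat.exists_dvd_of_not_prime2 (by omega) hp
  obtain ⟨b, rfl⟩ := ha
  have hb2 : 2 ≤ b := by nlinarith [halt]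
  rcases eq_or_ne a b with rfl | hne
  · have ha3 : 3 ≤ a := by nlinarith
    have key : 3 * a ≤ a * a := by nlinarith
    have : a * (2 * a) ∣ (a * a - 1).factorial :=
      aux_dvd_fac (by omega) (by omega) (by omega)
    exact dvd_trans ⟨2, by ring⟩ this
  · have k1 : 2 * a ≤ a * b ∧ 2 * b ≤ a * b := by
      constructor
      · calc 2 * a = a * 2 := by ring
          _ ≤ a * b := Nat.mul_le_mul_left a hb2
      · exact Nat.mul_le_mul_right b ha2
    rcases lt_or_gt_of_ne hne with h | h
    · exact aux_dvd_fac (by omega) h (by omega)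
    · have : b * a ∣ (a * b - 1).factorial := aux_dvd_fac (by omega) h (by omega)
      exact dvd_trans ⟨1, by ring⟩ this

lemma prime_dvd_fac_add_one {k : ℕ} (hk : 5 ≤ k) (hp : k.Prime) :
    k ∣ (k - 1).factorial + 1 := by
  haveI : Fact k.Prime := ⟨hp⟩
  have := ZMod.wilsons_lemma k
  rw [← ZMod.natCast_eq_zero_iff]
  push_cast
  rw [this]; ring

lemma den_ne {k : ℕ} (hk : 5 ≤ k) :
    Complex.exp (-(2 * (Real.pi : ℂ) * Complex.I) / k) - 1 ≠ 0 := by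
  rw [sub_ne_zero]
  intro h
  rw [Complex.exp_eq_one_iff] at h
  obtain ⟨m, hm⟩ := h
  have hk0 : (k : ℂ) ≠ 0 := Nat.cast_ne_zero.mpr (by omega)
  have h2 : (2 * (Real.pi : ℂ) * Complex.I) ≠ 0 := by
    simp [Real.pi_ne_zero, Complex.I_ne_zero, Complex.ofReal_ne_zero]
  have : (-1 : ℂ) = m * k := by
    field_simp at hm
    have := mul_right_cancel₀ h2 (by linear_combination (2 * (Real.pi:ℂ) * Complex.I) * hm : (-1 : ℂ) * (2 * (Real.pi:ℂ) * Complex.I) = (m * k) * (2 * (Real.pi:ℂ) * Complex.I))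
    exact this
  have hz : (-1 : ℤ) = m * k := by exact_mod_cast this
  have hdvd : (k : ℤ) ∣ 1 := by
    refine (dvd_neg).mp ⟨m, by linarith⟩
  have hle := Int.le_of_dvd one_pos hdvd
  have : (5 : ℤ) ≤ (k : ℤ) := by exact_mod_cast hk
  omega

lemma term_eq {k : ℕ} (hk : 5 ≤ k) :
    (Complex.exp (2 * (Real.pi : ℂ) * Complex.I * ((Nat.factorial (k - 1) : ℂ) / k)) - 1) /
      (Complex.exp (-(2 * (Real.pi : ℂ) * Complex.I) / k) - 1) =
    if k.Prime then (1 : ℂ) else 0 := by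
  have hk0 : (k : ℂ) ≠ 0 := Nat.cast_ne_zero.mpr (by omega)
  by_cases hp : k.Prime
  · obtain ⟨m, hm⟩ := prime_dvd_fac_add_one hk hp
    have hc : ((k - 1).factorial : ℂ) = k * m - 1 := by
      have : (((k - 1).factorial + 1 : ℕ) : ℂ) = ((k * m : ℕ) : ℂ) := by rw [hm]
      push_cast at this
      linear_combination this
    have harg : 2 * (Real.pi : ℂ) * Complex.I * (((k - 1).factorial : ℂ) / k) =
        ((m : ℤ) : ℂ) * (2 * (Real.pi : ℂ) * Complex.I) +
          -(2 * (Real.pi : ℂ) * Complex.I) / k := by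
      rw [hc]; field_simp; norm_cast
    rw [harg, Complex.exp_add, Complex.exp_int_mul_two_pi_mul_I, one_mul,
      div_self (den_ne hk), if_pos hp]
  · obtain ⟨m, hm⟩ := comp_dvd_fac hk hp
    have hc : ((k - 1).factorial : ℂ) = k * m := by exact_mod_cast congrArg (Nat.cast (R := ℂ)) hm
    have harg : 2 * (Real.pi : ℂ) * Complex.I * (((k - 1).factorial : ℂ) / k) =
        ((m : ℤ) : ℂ) * (2 * (Real.pi : ℂ) * Complex.I) := by
      rw [hc]; field_simp; norm_cast
    rw [harg, Complex.exp_int_mul_two_pi_mul_I, sub_self, zero_div, if_neg hp]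

lemma pc_eq {n : ℕ} (hn : 3 ≤ n) :
    n.primeCounting = 2 + (Finset.filter Nat.Prime (Finset.Icc 5 n)).card := by
  rcases lt_or_ge n 5 with h | h
  · have : Finset.Icc 5 n = ∅ := Finset.Icc_eq_empty (by omega)
    rw [this]
    interval_cases n <;> simp [Nat.primeCounting, Nat.primeCounting', Nat.count] <;>
      rw [List.range_succ] <;> simp [Nat.prime_iff] <;> decide
  · have hsplit : Finset.range (n + 1) = Finset.range 5 ∪ Finset.Icc 5 n := by
      ext x; simp only [Finset.mem_range, Finset.mem_union, Finset.mem_Icc]; omega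
    have hdisj : Disjoint (Finset.filter Nat.Prime (Finset.range 5))
        (Finset.filter Nat.Prime (Finset.Icc 5 n)) := by
      simp only [Finset.disjoint_left, Finset.mem_filter, Finset.mem_range, Finset.mem_Icc]
      omega
    rw [Nat.primeCounting, Nat.primeCounting', Nat.count_eq_card_filter_range, hsplit,
      Finset.filter_union, Finset.card_union_of_disjoint hdisj]
    congr 1

theorem laurent_prime_counting_formula (n : ℕ) (hn : 3 ≤ n) :
    (∀ k : ℕ, 5 ≤ k → Complex.exp (-(2 * (Real.pi : ℂ) * Complex.I) / k) - 1 ≠ 0) ∧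
    (Nat.primeCounting n : ℂ) =
      2 + ∑ k ∈ Finset.Icc 5 n,
        (Complex.exp (2 * (Real.pi : ℂ) * Complex.I * ((Nat.factorial (k - 1) : ℂ) / k)) - 1) /
          (Complex.exp (-(2 * (Real.pi : ℂ) * Complex.I) / k) - 1) := by
  refine ⟨fun k hk => den_ne hk, ?_⟩
  rw [Finset.sum_congr rfl (fun k hk => term_eq (Finset.mem_Icc.mp hk).1),
    Finset.sum_boole, pc_eq hn]
  push_cast
  ring
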